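/- Let (X,d) be a complete metric space and let ψ, φ : (0,∞) → ℝ be nondecreasing functions. Let w : X → X be a continuous map that is a (ψ,φ)-contraction. Let H(X) denote the space of nonempty compact subsets of X equipped with the Hausdorff metric h_d, and define ŵ : H(X) → H(X) by ŵ(A) = w(A), the image of A under w. Then ŵ is a (ψ,φ)-contraction on (H(X), h_d); i.e., for all A, B ∈ H(X) with h_d(ŵ(A), ŵ(B)) > 0, one has ψ(h_d(ŵ(A), ŵ(B))) ≤ φ(h_d(A, B)). -/

import Mathlib

open Filter Topology Set TopologicalSpace Metric

/-- The fractal operator `ŵ(A) = w(A)` on the space of nonempty compact subsets. -/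
noncomputable def fractalOp {X : Type*} [MetricSpace X] (w : X → X) (hw : Continuous w)
    (A : NonemptyCompacts X) : NonemptyCompacts X :=
  ⟨⟨w '' A, A.isCompact.image hw⟩, A.nonempty.image w⟩

/-- If `w` is a continuous (ψ,φ)-contraction with `ψ, φ` nondecreasing, then the
fractal operator `ŵ` is a (ψ,φ)-contraction on `(H(X), h_d)` (the space of nonempty
compact subsets with the Hausdorff metric). -/
theorem fractalOp_contraction {X : Type*} [MetricSpace X] [CompleteSpace X]
    (ψ φ : ℝ → ℝ)
    (hψ_mono : ∀ s t : ℝ, 0 < s → s ≤ t → ψ s ≤ ψ t)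
    (hφ_mono : ∀ s t : ℝ, 0 < s → s ≤ t → φ s ≤ φ t)
    (w : X → X) (hw : Continuous w)
    (hcontr : ∀ x y : X, 0 < dist (w x) (w y) → ψ (dist (w x) (w y)) ≤ φ (dist x y)) :
    ∀ A B : NonemptyCompacts X,
      0 < dist (fractalOp w hw A) (fractalOp w hw B) →
      ψ (dist (fractalOp w hw A) (fractalOp w hw B)) ≤ φ (dist A B) := by
  intro A B hpos
  set D : ℝ := dist A B with hD
  have hetop : EMetric.hausdorffEdist (A : Set X) (B : Set X) ≠ ⊤ :=
    hausdorffEdist_ne_top_of_nonempty_of_bounded A.nonempty B.nonempty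
      A.isCompact.isBounded B.isCompact.isBounded
  have hetop' : EMetric.hausdorffEdist (B : Set X) (A : Set X) ≠ ⊤ := by
    simpa only [EMetric.hausdorffEdist, Metric.hausdorffEDist_comm] using hetop
  -- the compact set of pairs at distance ≤ D
  set K : Set (X × X) := {p | p.1 ∈ (A : Set X) ∧ p.2 ∈ (B : Set X) ∧ dist p.1 p.2 ≤ D} with hK
  have hKsub : K ⊆ (A : Set X) ×ˢ (B : Set X) := fun p hp => ⟨hp.1, hp.2.1⟩
  have hKclosed : IsClosed K := by
    have : K = ((A : Set X) ×ˢ (B : Set X)) ∩ {p : X × X | dist p.1 p.2 ≤ D} := by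
      ext p; simp [hK, Set.mem_prod, and_assoc]
    rw [this]
    exact ((A.isCompact.isClosed.prod B.isCompact.isClosed)).inter
      (isClosed_le (by fun_prop) continuous_const)
  have hKcompact : IsCompact K :=
    (A.isCompact.prod B.isCompact).of_isClosed_subset hKclosed hKsub
  -- nearest point maps
  have near : ∀ a ∈ (A : Set X), ∃ b ∈ (B : Set X), dist a b ≤ D := by
    intro a ha
    obtain ⟨b, hb, hab⟩ := B.isCompact.exists_infDist_eq_dist B.nonempty a
    exact ⟨b, hb, by
      rw [← hab, hD, NonemptyCompacts.dist_eq]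
      exact infDist_le_hausdorffDist_of_mem ha hetop⟩
  have near' : ∀ b ∈ (B : Set X), ∃ a ∈ (A : Set X), dist a b ≤ D := by
    intro b hb
    obtain ⟨a, ha, hab⟩ := A.isCompact.exists_infDist_eq_dist A.nonempty b
    refine ⟨a, ha, ?_⟩
    rw [dist_comm, ← hab, hD, NonemptyCompacts.dist_eq, hausdorffDist_comm]
    exact infDist_le_hausdorffDist_of_mem hb hetop'
  have hKne : K.Nonempty := by
    obtain ⟨a, ha⟩ := A.nonempty
    obtain ⟨b, hb, hab⟩ := near a ha
    exact ⟨(a, b), ha, hb, hab⟩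
  -- maximize dist (w a) (w b) over K
  obtain ⟨⟨a₀, b₀⟩, hp₀, hmax⟩ := hKcompact.exists_isMaxOn hKne
    (Continuous.continuousOn (by fun_prop :
      Continuous fun p : X × X => dist (w p.1) (w p.2)))
  set m : ℝ := dist (w a₀) (w b₀) with hm
  have hm0 : 0 ≤ m := dist_nonneg
  -- the Hausdorff distance of images is at most m
  have hle : dist (fractalOp w hw A) (fractalOp w hw B) ≤ m := by
    rw [NonemptyCompacts.dist_eq]
    apply hausdorffDist_le_of_mem_dist hm0
    · rintro x ⟨a, ha, rfl⟩
      obtain ⟨b, hb, hab⟩ := near a ha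
      exact ⟨w b, Set.mem_image_of_mem w hb, hmax (⟨ha, hb, hab⟩ : (a, b) ∈ K)⟩
    · rintro y ⟨b, hb, rfl⟩
      obtain ⟨a, ha, hab⟩ := near' b hb
      refine ⟨w a, Set.mem_image_of_mem w ha, ?_⟩
      rw [dist_comm]
      exact hmax (⟨ha, hb, hab⟩ : (a, b) ∈ K)
  have hmpos : 0 < m := lt_of_lt_of_le hpos hle
  have hab_pos : 0 < dist a₀ b₀ := by
    rcases eq_or_lt_of_le (dist_nonneg (x := a₀) (y := b₀)) with h | h
    · exfalso
      have : a₀ = b₀ := by rwa [eq_comm, dist_eq_zero] at h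
      rw [hm, this, dist_self] at hmpos; exact lt_irrefl _ hmpos
    · exact h
  calc ψ (dist (fractalOp w hw A) (fractalOp w hw B)) ≤ ψ m := hψ_mono _ _ hpos hle
    _ ≤ φ (dist a₀ b₀) := hcontr a₀ b₀ hmpos
    _ ≤ φ D := hφ_mono _ _ hab_pos hp₀.2.2
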